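/- Let R be a commutative ring, I a nilpotent ideal of R (I^n = 0 for some n ≥ 1), and G a group. If x ∈ MonoidAlgebra R G is such that the coefficient x(1) at the identity element is a unit of R and x(g) ∈ I for every g ≠ 1, then x is a unit of MonoidAlgebra R G. -/

import Mathlib

/-- Let `R` be a commutative ring, `I` a nilpotent ideal of `R`
(`I ^ n = 0` with `n ≥ 1`), and `G` a group.  If `x : MonoidAlgebra R G` has a unit of `R`
as its coefficient at the identity element, and all of its other coefficients lie in `I`,
then `x` is a unit of the group algebra `MonoidAlgebra R G`. -/
theorem statement1 (R : Type*) [CommRing R] (G : Type*) [Group G]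
    (I : Ideal R) (n : ℕ) (hn : 1 ≤ n) (hI : I ^ n = ⊥)
    (x : MonoidAlgebra R G)
    (hx1 : IsUnit (x.coeff 1))
    (hxg : ∀ g : G, g ≠ 1 → x.coeff g ∈ I) :
    IsUnit x := by
  classical
  set u := x.coeff 1 with hu
  set y := x - MonoidAlgebra.single 1 u with hy
  have hyc : ∀ g : G, y.coeff g ∈ I := by
    intro g
    rw [hy, MonoidAlgebra.coeff_sub, Finsupp.sub_apply]
    by_cases h : g = 1
    · subst h
      simp [MonoidAlgebra.single_apply, hu]
    · have := hxg g h
      simpa [MonoidAlgebra.single_apply, Ne.symm h] using this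
  have key : ∀ k : ℕ, ∀ g : G, (y ^ k).coeff g ∈ I ^ k := by
    intro k
    induction k with
    | zero => intro g; simp [Ideal.one_eq_top]
    | succ k ih =>
      intro g
      rw [pow_succ y, MonoidAlgebra.coeff_mul, pow_succ I]
      refine Ideal.sum_mem _ fun g1 _ => Ideal.sum_mem _ fun g2 _ => ?_
      dsimp only
      split
      · exact Ideal.mul_mem_mul (ih g1) (hyc g2)
      · simp
  have hyn : y ^ n = 0 := by
    ext g
    have h := key n g
    rw [hI] at h
    simpa using h
  have hu' : IsUnit (MonoidAlgebra.single (1 : G) u : MonoidAlgebra R G) := by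
    have h : (MonoidAlgebra.single (1 : G) u : MonoidAlgebra R G)
        = algebraMap R (MonoidAlgebra R G) u := rfl
    rw [h]
    exact hx1.map (algebraMap R (MonoidAlgebra R G))
  have hcomm : Commute y (MonoidAlgebra.single (1 : G) u : MonoidAlgebra R G) := by
    have h : (MonoidAlgebra.single (1 : G) u : MonoidAlgebra R G)
        = algebraMap R (MonoidAlgebra R G) u := rfl
    rw [h]
    exact (Algebra.commutes u y).symm
  have hx : x = y + MonoidAlgebra.single (1 : G) u := by rw [hy]; abel
  rw [hx]
  exact IsNilpotent.isUnit_add_right_of_commute ⟨n, hyn⟩ hu' hcomm
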